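/- arXiv:1711.03783 — 2 statements merged into one kernel-verified Lean document; each statement's English description precedes it below -/
import Mathlib

section
/- Let A ∈ ℝ^{m×n}, M ∈ ℝ^{m×q}, y ∈ ℝ^m and μ > 0, let ρ* be the optimal value of the LASSO problem min{φ(Mᵀ(Ax − y)) : ‖x‖₁ ≤ μ}, and let Λ* = {x ∈ ℝⁿ : ‖x‖₁ ≤ μ, φ(Mᵀ(Ax − y)) ≤ ρ*} denote its solution set. Let (ε_j)_{j≥1} be a strictly decreasing sequence of positive numbers with ε_j → 0, and for each j let Q_j = ⋂_{i ∈ I_j} {u ∈ ℝ^q : (a^{j,i})ᵀu ≤ 1} be a polytope defined by finitely many vectors a^{j,i} with φ*(a^{j,i}) = 1, satisfying 𝔅^φ ⊆ Q_j ⊆ (1+ε_j)·𝔅^φ. Define Λ_j = {x ∈ ℝⁿ : ‖x‖₁ ≤ μ, (a^{j,i})ᵀ(Mᵀ(Ax − y)) ≤ ρ* for all i ∈ I_j}. For each j, let x_j be an arbitrary point of Λ_j. Then every accumulation point x̂ of the sequence (x_j)_{j≥1} satisfies ‖x̂‖₁ ≤ μ and φ(Mᵀ(Ax̂ − y)) ≤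 ρ*, i.e., x̂ ∈ Λ*. -/
open Matrix Filter Topology Pointwise

/-- The ℓ₁ norm on `Fin n → ℝ`. -/
noncomputable def l1norm {n : ℕ} (x : Fin n → ℝ) : ℝ := ∑ i, |x i|

/-- `φ` is a norm on `Fin q → ℝ`. -/
structure IsNorm {q : ℕ} (φ : (Fin q → ℝ) → ℝ) : Prop where
  nonneg : ∀ x, 0 ≤ φ x
  eq_zero_iff : ∀ x, φ x = 0 ↔ x = 0
  smul_eq : ∀ (c : ℝ) (x), φ (c • x) = |c| * φ x
  triangle : ∀ x y, φ (x + y) ≤ φ x + φ y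

/-- The dual norm `φ*(u) = sup {uᵀx : φ(x) ≤ 1}`. -/
noncomputable def dualNorm {q : ℕ} (φ : (Fin q → ℝ) → ℝ) (u : Fin q → ℝ) : ℝ :=
  sSup {t : ℝ | ∃ x : Fin q → ℝ, φ x ≤ 1 ∧ t = ∑ i, u i * x i}

/-- The `i`-th standard basis vector of `ℝ^q`. -/
def stdBasis {q : ℕ} (i : Fin q) : Fin q → ℝ := fun j => if j = i then 1 else 0

-- aux: φ ≤ l1norm
lemma phi_le_l1 {q : ℕ} (φ : (Fin q → ℝ) → ℝ) (hφ : IsNorm φ)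
    (hbasis : ∀ i : Fin q, φ (stdBasis i) = 1) (w : Fin q → ℝ) :
    φ w ≤ l1norm w := by
  have hzero : φ 0 = 0 := (hφ.eq_zero_iff 0).2 rfl
  have hrep : w = ∑ i : Fin q, w i • _root_.stdBasis i := by
    funext j
    simp [_root_.stdBasis, Finset.sum_apply, mul_ite, Finset.sum_ite_eq]
  have key : ∀ s : Finset (Fin q), φ (∑ i ∈ s, w i • _root_.stdBasis i) ≤ ∑ i ∈ s, |w i| := by
    intro s
    induction s using Finset.cons_induction with
    | empty => simp [hzero]
    | cons i s hi ih =>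
      rw [Finset.sum_cons, Finset.sum_cons]
      calc φ (w i • _root_.stdBasis i + ∑ j ∈ s, w j • _root_.stdBasis j)
          ≤ φ (w i • _root_.stdBasis i) + φ (∑ j ∈ s, w j • _root_.stdBasis j) := hφ.triangle _ _
        _ ≤ |w i| + ∑ j ∈ s, |w j| := by
            rw [hφ.smul_eq, hbasis i, mul_one]
            exact add_le_add_right ih _
  have := key Finset.univ
  rw [← hrep] at this
  simpa [l1norm] using this

lemma l1_continuous {n : ℕ} : Continuous (l1norm (n := n)) := by
  unfold l1norm
  exact continuous_finset_sum _ fun i _ => (continuous_apply i).abs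

/-- Lemma 5.1(i): any accumulation point of points taken from the relaxed LASSO
solution sets `Λ_j` lies in the LASSO solution set `Λ*`. -/
theorem LASSO_relaxation_accumulation (m n q : ℕ)
    (A : Matrix (Fin m) (Fin n) ℝ) (M : Matrix (Fin m) (Fin q) ℝ)
    (y : Fin m → ℝ) (μ : ℝ) (hμ : 0 < μ)
    (φ : (Fin q → ℝ) → ℝ) (hφ : IsNorm φ)
    (hbasis : ∀ i : Fin q, φ (stdBasis i) = 1)
    (hdbasis : ∀ i : Fin q, dualNorm φ (stdBasis i) = 1)
    (ρ : ℝ)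
    (hρ : ρ = sInf {t : ℝ | ∃ x : Fin n → ℝ,
      l1norm x ≤ μ ∧ t = φ (Mᵀ.mulVec (A.mulVec x - y))})
    (ε : ℕ → ℝ) (hεpos : ∀ j, 0 < ε j) (hεanti : StrictAnti ε)
    (hεlim : Tendsto ε atTop (𝓝 0))
    (N : ℕ → ℕ) (a : (j : ℕ) → Fin (N j) → (Fin q → ℝ))
    (ha : ∀ j i, dualNorm φ (a j i) = 1)
    (hBQ : ∀ j, {u : Fin q → ℝ | φ u ≤ 1} ⊆
      {u : Fin q → ℝ | ∀ i, ∑ r, a j i r * u r ≤ 1})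
    (hQB : ∀ j, {u : Fin q → ℝ | ∀ i, ∑ r, a j i r * u r ≤ 1} ⊆
      (1 + ε j) • {u : Fin q → ℝ | φ u ≤ 1})
    (x : ℕ → (Fin n → ℝ))
    (hx : ∀ j, l1norm (x j) ≤ μ ∧
      ∀ i, ∑ r, a j i r * Mᵀ.mulVec (A.mulVec (x j) - y) r ≤ ρ)
    (xhat : Fin n → ℝ) (hcluster : MapClusterPt xhat atTop x) :
    l1norm xhat ≤ μ ∧ φ (Mᵀ.mulVec (A.mulVec xhat - y)) ≤ ρ := by
  -- ρ ≥ 0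
  have hρ0 : 0 ≤ ρ := by
    rw [hρ]
    apply Real.sInf_nonneg
    rintro t ⟨z, -, rfl⟩
    exact hφ.nonneg _
  set v : (Fin n → ℝ) → (Fin q → ℝ) := fun z => Mᵀ.mulVec (A.mulVec z - y) with hv
  -- key bound: φ (v (x j)) ≤ (1 + ε j) * ρ
  have hkey : ∀ j, φ (v (x j)) ≤ (1 + ε j) * ρ := by
    intro j
    have hsub : ∀ t : ℝ, ρ < t → φ (v (x j)) ≤ (1 + ε j) * t := by
      intro t ht
      have ht0 : 0 < t := lt_of_le_of_lt hρ0 ht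
      have hu : (t⁻¹ • v (x j)) ∈ {u : Fin q → ℝ | ∀ i, ∑ r, a j i r * u r ≤ 1} := by
        intro i
        have := (hx j).2 i
        have : ∑ r, a j i r * (t⁻¹ • v (x j)) r = t⁻¹ * ∑ r, a j i r * v (x j) r := by
          rw [Finset.mul_sum]; apply Finset.sum_congr rfl; intro r _
          simp [Pi.smul_apply, smul_eq_mul]; ring
        rw [this]
        calc t⁻¹ * ∑ r, a j i r * v (x j) r ≤ t⁻¹ * t := by
              apply mul_le_mul_of_nonneg_left _ (inv_nonneg.2 ht0.le)
              exact le_trans ((hx j).2 i) ht.le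
          _ = 1 := inv_mul_cancel₀ ht0.ne'
      obtain ⟨w, hw, hweq⟩ := hQB j hu
      have hε1 : (0:ℝ) < 1 + ε j := by linarith [hεpos j]
      -- t⁻¹ • v (x j) = (1 + ε j) • w
      have : v (x j) = (t * (1 + ε j)) • w := by
        have := hweq
        calc v (x j) = t • (t⁻¹ • v (x j)) := by
              rw [smul_smul, mul_inv_cancel₀ ht0.ne', one_smul]
          _ = t • ((1 + ε j) • w) := by rw [← hweq]
          _ = (t * (1 + ε j)) • w := by rw [smul_smul]
      rw [this, hφ.smul_eq]
      rw [abs_of_pos (by positivity)]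
      calc t * (1 + ε j) * φ w ≤ t * (1 + ε j) * 1 :=
            mul_le_mul_of_nonneg_left hw (by positivity)
        _ = (1 + ε j) * t := by ring
    -- pass to the limit t → ρ⁺
    have hε1 : (0:ℝ) < 1 + ε j := by linarith [hεpos j]
    have : φ (v (x j)) / (1 + ε j) ≤ ρ := by
      apply le_of_forall_gt_imp_ge_of_dense
      intro t ht
      rw [div_le_iff₀ hε1]
      calc φ (v (x j)) ≤ (1 + ε j) * t := hsub t ht
        _ = t * (1 + ε j) := by ring
    calc φ (v (x j)) = φ (v (x j)) / (1 + ε j) * (1 + ε j) := by field_simp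
      _ ≤ ρ * (1 + ε j) := mul_le_mul_of_nonneg_right this hε1.le
      _ = (1 + ε j) * ρ := by ring
  -- subsequence
  obtain ⟨ψ, hψ, hψtend⟩ := TopologicalSpace.FirstCountableTopology.tendsto_subseq hcluster
  -- v is continuous
  have hvcont : Continuous v := by
    apply Continuous.matrix_mulVec continuous_const
    exact (Continuous.matrix_mulVec continuous_const continuous_id).sub continuous_const
  have hvt : Tendsto (fun k => v (x (ψ k))) atTop (𝓝 (v xhat)) :=
    (hvcont.tendsto _).comp hψtend
  constructor
  · -- l1 part
    have h1 : Tendsto (fun k => l1norm (x (ψ k))) atTop (𝓝 (l1norm xhat)) :=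
      (l1_continuous.tendsto _).comp hψtend
    exact le_of_tendsto h1 (Eventually.of_forall fun k => (hx (ψ k)).1)
  · -- φ part
    have hεψ : Tendsto (fun k => ε (ψ k)) atTop (𝓝 0) :=
      hεlim.comp hψ.tendsto_atTop
    have hbound : ∀ k, φ (v xhat) ≤ (1 + ε (ψ k)) * ρ + l1norm (v xhat - v (x (ψ k))) := by
      intro k
      calc φ (v xhat) = φ (v (x (ψ k)) + (v xhat - v (x (ψ k)))) := by ring_nf
        _ ≤ φ (v (x (ψ k))) + φ (v xhat - v (x (ψ k))) := hφ.triangle _ _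
        _ ≤ (1 + ε (ψ k)) * ρ + l1norm (v xhat - v (x (ψ k))) :=
            add_le_add (hkey (ψ k)) (phi_le_l1 φ hφ hbasis _)
    have hlim : Tendsto (fun k => (1 + ε (ψ k)) * ρ + l1norm (v xhat - v (x (ψ k))))
        atTop (𝓝 ((1 + 0) * ρ + l1norm (v xhat - v xhat))) := by
      apply Tendsto.add
      · exact (Tendsto.add tendsto_const_nhds hεψ).mul tendsto_const_nhds
      · exact (l1_continuous.tendsto _).comp (tendsto_const_nhds.sub hvt)
    have hz : l1norm (v xhat - v xhat) = 0 := by simp [l1norm]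
    rw [hz] at hlim
    norm_num at hlim
    exact ge_of_tendsto hlim (Eventually.of_forall hbound)
end

section
/- Let A ∈ ℝ^{m×n}, M ∈ ℝ^{m×q}, y ∈ ℝ^m and μ > 0, let ρ* be the optimal value of the LASSO problem min{φ(Mᵀ(Ax − y)) : ‖x‖₁ ≤ μ}, and let Λ* = {x ∈ ℝⁿ : ‖x‖₁ ≤ μ, φ(Mᵀ(Ax − y)) ≤ ρ*} denote its solution set. Let (ε_j)_{j≥1} be a strictly decreasing sequence of positive numbers with ε_j → 0, and for each j let Q_j = ⋂_{i ∈ I_j} {u ∈ ℝ^q : (a^{j,i})ᵀu ≤ 1} be a polytope defined by finitely many vectors a^{j,i} with φ*(a^{j,i}) = 1, satisfying Q_{j+1} ⊆ Q_j and 𝔅^φ ⊆ Q_j ⊆ (1+ε_j)·𝔅^φ. Define Λ_j = {x ∈ ℝⁿ : ‖x‖₁ ≤ μ, (a^{j,i})ᵀ(Mᵀ(Ax − y)) ≤ ρ* for all i ∈ I_j}. Then d^H(Λ*, Λ_j) → 0 as j → ∞. -/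
open Matrix Filter Topology Pointwise

/-- The Euclidean (ℓ₂) norm on `Fin n → ℝ`. -/
noncomputable def l2norm {n : ℕ} (x : Fin n → ℝ) : ℝ := Real.sqrt (∑ i, (x i) ^ 2)

/-- The Hausdorff distance (w.r.t. the Euclidean norm) between subsets of `Fin n → ℝ`. -/
noncomputable def hausdorffD {n : ℕ} (S T : Set (Fin n → ℝ)) : ℝ :=
  max (sSup {d : ℝ | ∃ u ∈ S, d = sInf {e : ℝ | ∃ z ∈ T, e = l2norm (u - z)}})
      (sSup {d : ℝ | ∃ z ∈ T, d = sInf {e : ℝ | ∃ u ∈ S, e = l2norm (u - z)}})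

/- ---------- auxiliary lemmas ---------- -/

lemma l2norm_nonneg' {n : ℕ} (x : Fin n → ℝ) : 0 ≤ l2norm x := Real.sqrt_nonneg _

lemma l2norm_sub_self' {n : ℕ} (u : Fin n → ℝ) : l2norm (u - u) = 0 := by
  simp [l2norm]

lemma l2norm_le_const_mul' {n : ℕ} (w : Fin n → ℝ) :
    l2norm w ≤ (Real.sqrt n + 1) * ‖w‖ := by
  have h1 : ∑ i, (w i) ^ 2 ≤ (n : ℝ) * ‖w‖ ^ 2 := by
    have : ∀ i ∈ (Finset.univ : Finset (Fin n)), (w i) ^ 2 ≤ ‖w‖ ^ 2 := by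
      intro i _
      have h := norm_le_pi_norm w i
      have : |w i| ≤ ‖w‖ := h
      nlinarith [abs_nonneg (w i), sq_abs (w i)]
    calc ∑ i, (w i) ^ 2 ≤ ∑ _i : Fin n, ‖w‖ ^ 2 := Finset.sum_le_sum this
      _ = (n : ℝ) * ‖w‖ ^ 2 := by simp [Finset.sum_const, mul_comm]
  calc l2norm w ≤ Real.sqrt ((n : ℝ) * ‖w‖ ^ 2) := Real.sqrt_le_sqrt h1
    _ = Real.sqrt n * ‖w‖ := by
        rw [Real.sqrt_mul (by positivity), Real.sqrt_sq (norm_nonneg w)]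
    _ ≤ (Real.sqrt n + 1) * ‖w‖ := by nlinarith [norm_nonneg w, Real.sqrt_nonneg (n:ℝ)]

lemma IsNorm.zero' {q : ℕ} {φ : (Fin q → ℝ) → ℝ} (hφ : IsNorm φ) : φ 0 = 0 :=
  (hφ.eq_zero_iff 0).2 rfl

lemma IsNorm.le_sum_abs' {q : ℕ} {φ : (Fin q → ℝ) → ℝ} (hφ : IsNorm φ)
    (hbasis : ∀ i : Fin q, φ (stdBasis i) = 1) (u : Fin q → ℝ) :
    φ u ≤ ∑ i, |u i| := by
  have hu : u = ∑ i, u i • stdBasis i := by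
    funext j
    simp [_root_.stdBasis, Finset.sum_apply]
  calc φ u = φ (∑ i, u i • stdBasis i) := by rw [← hu]
    _ ≤ ∑ i, φ (u i • stdBasis i) :=
        Finset.le_sum_of_subadditive φ hφ.zero'.le hφ.triangle _ _
    _ = ∑ i, |u i| := by simp [hφ.smul_eq, hbasis]

lemma IsNorm.continuous' {q : ℕ} {φ : (Fin q → ℝ) → ℝ} (hφ : IsNorm φ)
    (hbasis : ∀ i : Fin q, φ (stdBasis i) = 1) : Continuous φ := by
  have hsym : ∀ u w : Fin q → ℝ, φ (w - u) = φ (u - w) := by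
    intro u w
    have h := hφ.smul_eq (-1) (u - w)
    simpa [neg_sub] using h
  have hlip : LipschitzWith (q : NNReal) φ := by
    apply LipschitzWith.of_dist_le_mul
    intro u w
    rw [Real.dist_eq, dist_eq_norm]
    have h1 : φ u ≤ φ (u - w) + φ w := by
      have := hφ.triangle (u - w) w; simpa using this
    have h2 : φ w ≤ φ (u - w) + φ u := by
      have := hφ.triangle (w - u) u
      simpa [hsym u w] using this
    have h3 : φ (u - w) ≤ ∑ i, |(u - w) i| := hφ.le_sum_abs' hbasis _
    have h4 : ∑ i, |(u - w) i| ≤ (q : ℝ) * ‖u - w‖ := by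
      calc ∑ i, |(u - w) i| ≤ ∑ _i : Fin q, ‖u - w‖ :=
            Finset.sum_le_sum fun i _ => norm_le_pi_norm (u - w) i
        _ = (q : ℝ) * ‖u - w‖ := by simp [Finset.sum_const, mul_comm]
    have : |φ u - φ w| ≤ φ (u - w) := abs_sub_le_iff.2 ⟨by linarith, by linarith⟩
    calc |φ u - φ w| ≤ (q : ℝ) * ‖u - w‖ := by linarith
      _ = ((q : NNReal) : ℝ) * ‖u - w‖ := by norm_num
  exact hlip.continuous

lemma IsNorm.exists_lower' {q : ℕ} {φ : (Fin q → ℝ) → ℝ} (hφ : IsNorm φ)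
    (hbasis : ∀ i : Fin q, φ (stdBasis i) = 1) :
    ∃ c > 0, ∀ x : Fin q → ℝ, c * ‖x‖ ≤ φ x := by
  have hφcont := hφ.continuous' hbasis
  rcases Nat.eq_zero_or_pos q with hq | hq
  · refine ⟨1, one_pos, fun x => ?_⟩
    have hx : x = 0 := by subst hq; funext i; exact i.elim0
    simp [hx, hφ.zero']
  · have hsph : IsCompact (Metric.sphere (0 : Fin q → ℝ) 1) := isCompact_sphere 0 1
    have hne : (Metric.sphere (0 : Fin q → ℝ) 1).Nonempty := by
      refine ⟨stdBasis ⟨0, hq⟩, ?_⟩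
      rw [mem_sphere_zero_iff_norm]
      apply le_antisymm
      · refine (pi_norm_le_iff_of_nonneg (by norm_num)).2 fun j => ?_
        simp only [_root_.stdBasis, Real.norm_eq_abs]
        split_ifs <;> norm_num
      · have h := norm_le_pi_norm (stdBasis (⟨0, hq⟩ : Fin q)) ⟨0, hq⟩
        simpa [_root_.stdBasis] using h
    obtain ⟨x₀, hx₀s, hx₀m⟩ := hsph.exists_isMinOn hne hφcont.continuousOn
    have hx₀n : ‖x₀‖ = 1 := mem_sphere_zero_iff_norm.1 hx₀s
    have hx₀0 : x₀ ≠ 0 := by intro h; rw [h] at hx₀n; simp at hx₀n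
    have hcpos : 0 < φ x₀ :=
      lt_of_le_of_ne (hφ.nonneg _) fun h => hx₀0 ((hφ.eq_zero_iff _).1 h.symm)
    refine ⟨φ x₀, hcpos, fun x => ?_⟩
    rcases eq_or_ne x 0 with rfl | hx
    · simp [hφ.zero']
    · have hxn : 0 < ‖x‖ := norm_pos_iff.2 hx
      have hw : ‖x‖⁻¹ • x ∈ Metric.sphere (0 : Fin q → ℝ) 1 := by
        rw [mem_sphere_zero_iff_norm, norm_smul]
        simp [abs_of_pos (inv_pos.2 hxn), inv_mul_cancel₀ hxn.ne']
      have h1 : φ x₀ ≤ φ (‖x‖⁻¹ • x) := isMinOn_iff.1 hx₀m _ hw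
      rw [hφ.smul_eq, abs_of_pos (inv_pos.2 hxn)] at h1
      have h2 := mul_le_mul_of_nonneg_left h1 hxn.le
      rw [mul_inv_cancel_left₀ hxn.ne'] at h2
      nlinarith

lemma IsNorm.pairing' {q : ℕ} {φ : (Fin q → ℝ) → ℝ} (hφ : IsNorm φ)
    (hbasis : ∀ i : Fin q, φ (stdBasis i) = 1)
    (u : Fin q → ℝ) (hu : dualNorm φ u = 1) (x : Fin q → ℝ) :
    ∑ i, u i * x i ≤ φ x := by
  obtain ⟨c, hcpos, hclow⟩ := hφ.exists_lower' hbasis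
  have hbdd : BddAbove {t : ℝ | ∃ z : Fin q → ℝ, φ z ≤ 1 ∧ t = ∑ i, u i * z i} := by
    refine ⟨(∑ i, |u i|) * c⁻¹, ?_⟩
    rintro t ⟨z, hz, rfl⟩
    have hz' : ‖z‖ ≤ c⁻¹ := by
      have h1 : c * ‖z‖ ≤ 1 := (hclow z).trans hz
      have h2 : ‖z‖ = c⁻¹ * (c * ‖z‖) := by field_simp
      rw [h2]
      calc c⁻¹ * (c * ‖z‖) ≤ c⁻¹ * 1 := mul_le_mul_of_nonneg_left h1 (inv_pos.2 hcpos).le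
        _ = c⁻¹ := mul_one _
    calc ∑ i, u i * z i ≤ ∑ i, |u i| * c⁻¹ := by
          refine Finset.sum_le_sum fun i _ => ?_
          calc u i * z i ≤ |u i * z i| := le_abs_self _
            _ = |u i| * |z i| := abs_mul _ _
            _ ≤ |u i| * c⁻¹ := by
                refine mul_le_mul_of_nonneg_left ?_ (abs_nonneg _)
                exact (norm_le_pi_norm z i).trans hz'
      _ = (∑ i, |u i|) * c⁻¹ := (Finset.sum_mul _ _ _).symm
  have key : ∀ z : Fin q → ℝ, φ z ≤ 1 → ∑ i, u i * z i ≤ 1 := by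
    intro z hz
    have := le_csSup hbdd (show (∑ i, u i * z i) ∈ _ from ⟨z, hz, rfl⟩)
    rwa [show sSup {t : ℝ | ∃ x : Fin q → ℝ, φ x ≤ 1 ∧ t = ∑ i, u i * x i} = 1 from hu] at this
  by_cases hx : φ x = 0
  · have hx0 : x = 0 := (hφ.eq_zero_iff x).1 hx
    subst hx0
    simp [hφ.zero']
  · have hxpos : 0 < φ x := lt_of_le_of_ne (hφ.nonneg x) (Ne.symm hx)
    have h1 : φ ((φ x)⁻¹ • x) ≤ 1 := by
      rw [hφ.smul_eq, abs_of_pos (inv_pos.2 hxpos), inv_mul_cancel₀ hxpos.ne']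
    have h2 := key _ h1
    have h3 : ∑ i, u i * ((φ x)⁻¹ • x) i = (φ x)⁻¹ * ∑ i, u i * x i := by
      rw [Finset.mul_sum]
      refine Finset.sum_congr rfl fun i _ => ?_
      simp [Pi.smul_apply, smul_eq_mul]; ring
    rw [h3] at h2
    have h4 := mul_le_mul_of_nonneg_left h2 hxpos.le
    rw [mul_inv_cancel_left₀ hxpos.ne'] at h4
    linarith

/-- Lemma 5.1(ii): the relaxed LASSO solution sets `Λ_j` converge to the LASSO
solution set `Λ*` in Hausdorff distance. -/
theorem LASSO_relaxation_hausdorff_convergence (m n q : ℕ)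
    (A : Matrix (Fin m) (Fin n) ℝ) (M : Matrix (Fin m) (Fin q) ℝ)
    (y : Fin m → ℝ) (μ : ℝ) (hμ : 0 < μ)
    (φ : (Fin q → ℝ) → ℝ) (hφ : IsNorm φ)
    (hbasis : ∀ i : Fin q, φ (stdBasis i) = 1)
    (hdbasis : ∀ i : Fin q, dualNorm φ (stdBasis i) = 1)
    (ρ : ℝ)
    (hρ : ρ = sInf {t : ℝ | ∃ x : Fin n → ℝ,
      l1norm x ≤ μ ∧ t = φ (Mᵀ.mulVec (A.mulVec x - y))})
    (ε : ℕ → ℝ) (hεpos : ∀ j, 0 < ε j) (hεanti : StrictAnti ε)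
    (hεlim : Tendsto ε atTop (𝓝 0))
    (N : ℕ → ℕ) (a : (j : ℕ) → Fin (N j) → (Fin q → ℝ))
    (ha : ∀ j i, dualNorm φ (a j i) = 1)
    (hnested : ∀ j, {u : Fin q → ℝ | ∀ i, ∑ r, a (j + 1) i r * u r ≤ 1} ⊆
      {u : Fin q → ℝ | ∀ i, ∑ r, a j i r * u r ≤ 1})
    (hBQ : ∀ j, {u : Fin q → ℝ | φ u ≤ 1} ⊆
      {u : Fin q → ℝ | ∀ i, ∑ r, a j i r * u r ≤ 1})
    (hQB : ∀ j, {u : Fin q → ℝ | ∀ i, ∑ r, a j i r * u r ≤ 1} ⊆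
      (1 + ε j) • {u : Fin q → ℝ | φ u ≤ 1}) :
    Tendsto (fun j =>
        hausdorffD
          {x : Fin n → ℝ | l1norm x ≤ μ ∧ φ (Mᵀ.mulVec (A.mulVec x - y)) ≤ ρ}
          {x : Fin n → ℝ | l1norm x ≤ μ ∧
            ∀ i, ∑ r, a j i r * Mᵀ.mulVec (A.mulVec x - y) r ≤ ρ})
      atTop (𝓝 0) := by
  classical
  set v : (Fin n → ℝ) → (Fin q → ℝ) := fun x => Mᵀ.mulVec (A.mulVec x - y) with hv
  set f : (Fin n → ℝ) → ℝ := fun x => φ (v x) with hf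
  have hφcont : Continuous φ := hφ.continuous' hbasis
  -- continuity of f
  have hvc : Continuous v := by
    have h1 : Continuous fun x : Fin n → ℝ => A.mulVec x := by
      have := A.mulVecLin.continuous_of_finiteDimensional
      exact this
    have h2 : Continuous fun u : Fin m → ℝ => Mᵀ.mulVec u := by
      have := Mᵀ.mulVecLin.continuous_of_finiteDimensional
      exact this
    exact h2.comp (h1.sub continuous_const)
  have hfc : Continuous f := hφcont.comp hvc
  -- the constraint set K
  set K : Set (Fin n → ℝ) := {x | l1norm x ≤ μ} with hK
  have hl1c : Continuous fun x : Fin n → ℝ => l1norm x := by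
    unfold l1norm
    exact continuous_finset_sum _ fun i _ => (continuous_apply i).abs
  have hKclosed : IsClosed K := isClosed_le hl1c continuous_const
  have hKbdd : Bornology.IsBounded K := by
    refine (Metric.isBounded_closedBall (x := (0 : Fin n → ℝ)) (r := μ)).subset ?_
    intro x hx
    rw [Metric.mem_closedBall, dist_zero_right]
    refine (pi_norm_le_iff_of_nonneg hμ.le).2 fun i => ?_
    have h1 : |x i| ≤ l1norm x :=
      Finset.single_le_sum (fun j _ => abs_nonneg (x j)) (Finset.mem_univ i)
    exact h1.trans hx
  have hKc : IsCompact K := Metric.isCompact_of_isClosed_isBounded hKclosed hKbdd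
  have hK0 : (0 : Fin n → ℝ) ∈ K := by simp [hK, l1norm, hμ.le]
  -- the minimizer
  obtain ⟨x₀, hx₀K, hx₀m⟩ := hKc.exists_isMinOn ⟨0, hK0⟩ hfc.continuousOn
  have hρ0 : ρ = f x₀ := by
    rw [hρ]
    refine IsLeast.csInf_eq ⟨⟨x₀, hx₀K, rfl⟩, ?_⟩
    rintro t ⟨x, hx, rfl⟩
    exact isMinOn_iff.1 hx₀m x hx
  have hρnn : 0 ≤ ρ := hρ0 ▸ hφ.nonneg _
  set Λs : Set (Fin n → ℝ) := {x | l1norm x ≤ μ ∧ f x ≤ ρ} with hΛs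
  have hx₀Λ : x₀ ∈ Λs := ⟨hx₀K, hρ0.ge⟩
  -- Λs ⊆ Λ j
  have hsub : ∀ j, Λs ⊆ {x : Fin n → ℝ | l1norm x ≤ μ ∧ ∀ i, ∑ r, a j i r * v x r ≤ ρ} := by
    rintro j x ⟨hx1, hx2⟩
    exact ⟨hx1, fun i => (hφ.pairing' hbasis _ (ha j i) (v x)).trans hx2⟩
  -- upper bound on Λ j
  have hup : ∀ j (x : Fin n → ℝ), (∀ i, ∑ r, a j i r * v x r ≤ ρ) → f x ≤ ρ + ε j * ρ := by
    intro j x hx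
    have hεj := hεpos j
    have hstep : ∀ t : ℝ, ρ < t → φ (v x) ≤ (1 + ε j) * t := by
      intro t ht
      have ht0 : 0 < t := lt_of_le_of_lt hρnn ht
      have hmem : (t⁻¹ • v x) ∈ {u : Fin q → ℝ | ∀ i, ∑ r, a j i r * u r ≤ 1} := by
        intro i
        have h1 : ∑ r, a j i r * (t⁻¹ • v x) r = t⁻¹ * ∑ r, a j i r * v x r := by
          rw [Finset.mul_sum]
          refine Finset.sum_congr rfl fun r _ => ?_
          simp [Pi.smul_apply, smul_eq_mul]; ring
        rw [h1]
        have h2 : t⁻¹ * ∑ r, a j i r * v x r ≤ t⁻¹ * ρ :=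
          mul_le_mul_of_nonneg_left (hx i) (inv_pos.2 ht0).le
        have h3 : t⁻¹ * ρ ≤ 1 := by
          rw [inv_mul_le_iff₀ ht0, mul_one]; exact ht.le
        exact h2.trans h3
      obtain ⟨w, hw, hweq⟩ := hQB j hmem
      have hw' : φ w ≤ 1 := hw
      have hweq' : (1 + ε j) • w = t⁻¹ • v x := hweq
      have h4 : φ (t⁻¹ • v x) ≤ 1 + ε j := by
        rw [← hweq', hφ.smul_eq, abs_of_pos (by linarith : (0:ℝ) < 1 + ε j)]
        nlinarith [hw', hφ.nonneg w]
      rw [hφ.smul_eq, abs_of_pos (inv_pos.2 ht0)] at h4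
      have h5 := mul_le_mul_of_nonneg_left h4 ht0.le
      rw [mul_inv_cancel_left₀ ht0.ne'] at h5
      linarith
    by_contra hcc
    push_neg at hcc
    have hfx : ρ + ε j * ρ < φ (v x) := hcc
    set s : ℝ := φ (v x) / (1 + ε j) with hs
    have hρs : ρ < s := by
      rw [hs, lt_div_iff₀ (by linarith)]
      nlinarith
    have ht := hstep ((ρ + s) / 2) (by linarith)
    have : (1 + ε j) * ((ρ + s) / 2) < (1 + ε j) * s := by
      refine mul_lt_mul_of_pos_left ?_ (by linarith)
      linarith
    have hseq : (1 + ε j) * s = φ (v x) := by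
      rw [hs]; field_simp
    linarith
  -- the key compactness claim
  have claim : ∀ δ : ℝ, 0 < δ → ∃ η > 0, ∀ x ∈ K, f x ≤ ρ + η →
      ∃ u ∈ Λs, l2norm (u - x) ≤ δ := by
    intro δ hδ
    by_contra hcon
    push_neg at hcon
    have hcon' : ∀ k : ℕ, ∃ x ∈ K, f x ≤ ρ + 1 / ((k : ℝ) + 1) ∧
        ∀ u ∈ Λs, δ < l2norm (u - x) := by
      intro k
      obtain ⟨x, hxK, hxf, hxd⟩ := hcon (1 / ((k : ℝ) + 1)) (by positivity)
      exact ⟨x, hxK, hxf, hxd⟩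
    choose x hxK hxf hxd using hcon'
    obtain ⟨b, hbK, ψ, hψ, hψt⟩ := hKc.tendsto_subseq hxK
    have hfb : f b ≤ ρ := by
      have h1 : Tendsto (fun i => f (x (ψ i))) atTop (𝓝 (f b)) :=
        (hfc.tendsto b).comp hψt
      have h2 : Tendsto (fun i : ℕ => ρ + 1 / ((ψ i : ℝ) + 1)) atTop (𝓝 (ρ + 0)) :=
        tendsto_const_nhds.add
          (tendsto_one_div_add_atTop_nhds_zero_nat.comp hψ.tendsto_atTop)
      rw [add_zero] at h2
      exact le_of_tendsto_of_tendsto' h1 h2 fun i => hxf (ψ i)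
    have hbΛ : b ∈ Λs := ⟨hbK, hfb⟩
    -- derive the contradiction
    have hC : (0 : ℝ) < Real.sqrt n + 1 := by positivity
    obtain ⟨i₀, hi₀⟩ := Metric.tendsto_atTop.1 hψt (δ / (Real.sqrt n + 1)) (by positivity)
    set i := i₀ with hidef
    have hdist : ‖b - x (ψ i)‖ < δ / (Real.sqrt n + 1) := by
      rw [← dist_eq_norm, dist_comm]
      exact hi₀ i le_rfl
    have h5 : l2norm (b - x (ψ i)) < δ := by
      calc l2norm (b - x (ψ i)) ≤ (Real.sqrt n + 1) * ‖b - x (ψ i)‖ :=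
            l2norm_le_const_mul' _
        _ < (Real.sqrt n + 1) * (δ / (Real.sqrt n + 1)) :=
            mul_lt_mul_of_pos_left hdist hC
        _ = δ := by field_simp
    exact absurd h5 (not_lt.2 (hxd (ψ i) b hbΛ).le)
  -- assemble the convergence
  rw [Metric.tendsto_atTop]
  intro εε hεε
  obtain ⟨η, hη, hηC⟩ := claim (εε / 2) (by positivity)
  have htend : Tendsto (fun j => ε j * ρ) atTop (𝓝 0) := by
    simpa using hεlim.mul_const ρ
  obtain ⟨N₀, hN₀⟩ := eventually_atTop.1 (htend.eventually_lt_const hη)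
  refine ⟨N₀, fun j hj => ?_⟩
  set Λj : Set (Fin n → ℝ) := {x : Fin n → ℝ | l1norm x ≤ μ ∧
      ∀ i, ∑ r, a j i r * v x r ≤ ρ} with hΛj
  have hΛsub : Λs ⊆ Λj := hsub j
  -- first component is 0
  have hinner : ∀ u ∈ Λs, sInf {e : ℝ | ∃ z ∈ Λj, e = l2norm (u - z)} = 0 := by
    intro u hu
    refine le_antisymm (csInf_le ⟨0, ?_⟩ ⟨u, hΛsub hu, (l2norm_sub_self' u).symm⟩)
      (le_csInf ⟨_, u, hΛsub hu, rfl⟩ ?_)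
    · rintro e ⟨z, hz, rfl⟩; exact l2norm_nonneg' _
    · rintro e ⟨z, hz, rfl⟩; exact l2norm_nonneg' _
  have hs1 : sSup {d : ℝ | ∃ u ∈ Λs, d = sInf {e : ℝ | ∃ z ∈ Λj, e = l2norm (u - z)}} = 0 := by
    have : {d : ℝ | ∃ u ∈ Λs, d = sInf {e : ℝ | ∃ z ∈ Λj, e = l2norm (u - z)}} = {0} := by
      ext d
      constructor
      · rintro ⟨u, hu, rfl⟩
        simp [hinner u hu]
      · rintro rfl
        exact ⟨x₀, hx₀Λ, (hinner x₀ hx₀Λ).symm⟩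
    rw [this, csSup_singleton]
  -- second component ≤ εε/2
  have hs2 : sSup {d : ℝ | ∃ z ∈ Λj, d = sInf {e : ℝ | ∃ u ∈ Λs, e = l2norm (u - z)}} ≤
      εε / 2 := by
    refine Real.sSup_le ?_ (by positivity)
    rintro d ⟨z, hz, rfl⟩
    have hzf : f z ≤ ρ + η := by
      have h1 := hup j z hz.2
      have h2 : ε j * ρ < η := hN₀ j hj
      linarith
    obtain ⟨u, hu, hul⟩ := hηC z hz.1 hzf
    have hb : (0 : ℝ) ∈ lowerBounds {e : ℝ | ∃ u ∈ Λs, e = l2norm (u - z)} := by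
      rintro e ⟨w, hw, rfl⟩; exact l2norm_nonneg' _
    have hmem : l2norm (u - z) ∈ {e : ℝ | ∃ u ∈ Λs, e = l2norm (u - z)} := ⟨u, hu, rfl⟩
    exact (csInf_le ⟨0, hb⟩ hmem).trans hul
  -- conclude
  have heq : hausdorffD Λs Λj =
      max (sSup {d : ℝ | ∃ u ∈ Λs, d = sInf {e : ℝ | ∃ z ∈ Λj, e = l2norm (u - z)}})
        (sSup {d : ℝ | ∃ z ∈ Λj, d = sInf {e : ℝ | ∃ u ∈ Λs, e = l2norm (u - z)}}) := rfl
  have hfinal : dist (hausdorffD Λs Λj) 0 < εε := by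
    rw [Real.dist_eq, sub_zero, heq, hs1]
    rw [abs_of_nonneg (le_max_left _ _)]
    have := max_le (by positivity : (0:ℝ) ≤ εε / 2) hs2
    linarith
  exact hfinal
end
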